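/- Let d ≥ 1 and partition the index set {1, …, d} into disjoint blocks B₁, …, B_k of sizes p₁, …, p_k. For each m define u_m(y) = Σ_{j ∈ B_m} y_j² and its degree-zero homogeneous extension X̂_m(y) = u_m(y)/‖y‖² on ℝ^d \ {0}. Then for every x with ‖x‖ = 1 and all m, l: ΔX̂_m(x) = 2(p_m - d·u_m(x)) and ⟪∇X̂_m(x), ∇X̂_l(x)⟫ = 4 u_m(x) (δ_{ml} - u_l(x)). That is, the spherical Laplacian projects through the map (u₁, …, u_{k-1}) onto the polynomial model on the simplex with Γ(X_m, X_l) = 4X_m(δ_{ml} - X_l) and L(X_m) = 2(p_m - d X_m). -/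

import Mathlib

open RealInnerProductSpace

/-- The Euclidean Laplacian on `ℝ^d`: the sum of the second partial derivatives. -/
noncomputable def lap {d : ℕ} (f : EuclideanSpace ℝ (Fin d) → ℝ)
    (x : EuclideanSpace ℝ (Fin d)) : ℝ :=
  ∑ i, fderiv ℝ (fun y => fderiv ℝ f y (EuclideanSpace.single i 1)) x
    (EuclideanSpace.single i 1)

section Aux
variable {d : ℕ}


local notation "E" => EuclideanSpace ℝ (Fin d)

lemma norm_sq_eq (y : E) : ‖y‖ ^ 2 = ∑ j, y j ^ 2 := by
  rw [EuclideanSpace.norm_eq]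
  rw [Real.sq_sqrt (Finset.sum_nonneg fun _ _ => sq_nonneg _)]
  exact Finset.sum_congr rfl fun j _ => by rw [Real.norm_eq_abs, sq_abs]

lemma proj_apply' (j : Fin d) (y : E) : (EuclideanSpace.proj j : E →L[ℝ] ℝ) y = y j := rfl

lemma hasFDerivAt_sumsq (S : Finset (Fin d)) (y : E) :
    HasFDerivAt (fun y : E => ∑ j ∈ S, y j ^ 2)
      (∑ j ∈ S, (2 * y j) • (EuclideanSpace.proj j : E →L[ℝ] ℝ)) y := by
  apply HasFDerivAt.fun_sum
  intro j _
  have h := ((EuclideanSpace.proj j : E →L[ℝ] ℝ).hasFDerivAt (x := y)).mul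
    ((EuclideanSpace.proj j : E →L[ℝ] ℝ).hasFDerivAt (x := y))
  simp only [proj_apply'] at h
  convert h using 1
  · ext z; simp [proj_apply', sq]
  · ext v; simp [proj_apply', two_mul]; ring
  · rw [two_mul, add_smul]

lemma hasFDerivAt_ratio (S : Finset (Fin d)) (y : E) (hy : (∑ j, y j ^ 2) ≠ 0) :
    HasFDerivAt (fun y : E => (∑ j ∈ S, y j ^ 2) / ∑ j, y j ^ 2)
      ((∑ j ∈ S, y j ^ 2) • (-(((∑ j, y j ^ 2)) ^ 2)⁻¹ •
          ∑ j, (2 * y j) • (EuclideanSpace.proj j : E →L[ℝ] ℝ))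
        + (∑ j, y j ^ 2)⁻¹ • ∑ j ∈ S, (2 * y j) • (EuclideanSpace.proj j : E →L[ℝ] ℝ)) y := by
  have h := (hasFDerivAt_sumsq S y).mul
    ((hasDerivAt_inv hy).comp_hasFDerivAt y (hasFDerivAt_sumsq Finset.univ y))
  simp only [div_eq_mul_inv]
  exact h

lemma hasGradientAt_aux (S : Finset (Fin d)) (x : E) (hx' : ∑ j, x j ^ 2 = 1) :
    HasGradientAt (fun y : E => (∑ j ∈ S, y j ^ 2) / ∑ j, y j ^ 2)
      (WithLp.toLp 2 (fun j => 2 * ((if j ∈ S then x j else 0) - (∑ i ∈ S, x i ^ 2) * x j)) : E) x := by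
  rw [hasGradientAt_iff_hasFDerivAt]
  have hne : (∑ j, x j ^ 2) ≠ 0 := by rw [hx']; norm_num
  refine (hasFDerivAt_ratio S x hne).congr_fderiv ?_
  symm
  apply ContinuousLinearMap.ext
  intro v
  simp only [InnerProductSpace.toDual_apply_apply, PiLp.inner_apply, RCLike.inner_apply, PiLp.toLp_apply,
    conj_trivial, ContinuousLinearMap.add_apply, ContinuousLinearMap.smul_apply,
    ContinuousLinearMap.sum_apply, proj_apply', smul_eq_mul, hx']
  have h1 : ∀ j, 2 * ((if j ∈ S then x j else 0) - (∑ i ∈ S, x i ^ 2) * x j) * v j =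
      (if j ∈ S then 2 * x j * v j else 0) - (∑ i ∈ S, x i ^ 2) * (2 * x j * v j) :=
    fun j => by split <;> ring
  rw [Finset.sum_congr rfl (fun j _ => (mul_comm _ _).trans (h1 j)), Finset.sum_sub_distrib, Finset.sum_ite_mem,
    Finset.univ_inter, ← Finset.mul_sum]
  norm_num
  ring

lemma fderiv_dir (S : Finset (Fin d)) (y : E) (hy : (∑ j, y j ^ 2) ≠ 0) (i : Fin d) :
    fderiv ℝ (fun y : E => (∑ j ∈ S, y j ^ 2) / ∑ j, y j ^ 2) y
        (EuclideanSpace.single i 1) =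
      (if i ∈ S then (1:ℝ) else 0) * (2 * y i) / (∑ j, y j ^ 2)
        - 2 * (∑ j ∈ S, y j ^ 2) * y i / (∑ j, y j ^ 2) ^ 2 := by
  rw [(hasFDerivAt_ratio S y hy).fderiv]
  simp only [ContinuousLinearMap.add_apply, ContinuousLinearMap.smul_apply,
    ContinuousLinearMap.sum_apply, proj_apply', EuclideanSpace.single_apply,
    smul_eq_mul, mul_ite, mul_one, mul_zero, Finset.sum_ite_eq', Finset.mem_univ, if_true]
  split <;> field_simp <;> ring

lemma fderiv_second (S : Finset (Fin d)) (i : Fin d) (x : E) (hx' : ∑ j, x j ^ 2 = 1) :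
    fderiv ℝ (fun y : E => (if i ∈ S then (1:ℝ) else 0) * (2 * y i) / (∑ j, y j ^ 2)
        - 2 * (∑ j ∈ S, y j ^ 2) * y i / (∑ j, y j ^ 2) ^ 2) x
      (EuclideanSpace.single i 1) =
      2 * (if i ∈ S then (1:ℝ) else 0) - 8 * (if i ∈ S then (1:ℝ) else 0) * x i ^ 2
        - 2 * (∑ j ∈ S, x j ^ 2) + 8 * x i ^ 2 * (∑ j ∈ S, x j ^ 2) := by
  have hne : (∑ j, x j ^ 2) ≠ 0 := by rw [hx']; norm_num
  have hn := hasFDerivAt_sumsq Finset.univ x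
  have hs := hasFDerivAt_sumsq S x
  have hinv := (hasDerivAt_inv hne).comp_hasFDerivAt x hn
  have hinv2 := ((hasDerivAt_pow 2 (∑ j, x j ^ 2)).inv (pow_ne_zero 2 hne)).comp_hasFDerivAt x hn
  have ht1 : HasFDerivAt (fun y : E => y i * (∑ j, y j ^ 2)⁻¹) _ x :=
    (EuclideanSpace.proj i : E →L[ℝ] ℝ).hasFDerivAt.mul hinv
  have ht2 : HasFDerivAt (fun y : E => ((∑ j ∈ S, y j ^ 2) * y i) * (((∑ j, y j ^ 2)) ^ 2)⁻¹) _ x :=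
    (hs.mul (EuclideanSpace.proj i : E →L[ℝ] ℝ).hasFDerivAt).mul hinv2
  have hG := (ht1.const_mul ((if i ∈ S then (1:ℝ) else 0) * 2)).fun_sub (ht2.const_mul 2)
  have hfun : (fun y : E => (if i ∈ S then (1:ℝ) else 0) * (2 * y i) / (∑ j, y j ^ 2)
        - 2 * (∑ j ∈ S, y j ^ 2) * y i / (∑ j, y j ^ 2) ^ 2) =
      (fun y : E => ((if i ∈ S then (1:ℝ) else 0) * 2) * (y i * (∑ j, y j ^ 2)⁻¹)
        - 2 * (((∑ j ∈ S, y j ^ 2) * y i) * (((∑ j, y j ^ 2)) ^ 2)⁻¹)) := by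
    funext y; simp only [div_eq_mul_inv]; ring
  rw [hfun, hG.fderiv]
  simp only [ContinuousLinearMap.sub_apply, ContinuousLinearMap.add_apply,
    ContinuousLinearMap.smul_apply, ContinuousLinearMap.sum_apply, proj_apply',
    EuclideanSpace.single_apply, smul_eq_mul, mul_ite, mul_one, mul_zero, Pi.mul_apply,
    Finset.sum_ite_eq', Finset.mem_univ, if_true, hx']
  split <;> ring

lemma lap_aux (S : Finset (Fin d)) (x : E) (hx' : ∑ j, x j ^ 2 = 1) :
    lap (fun y : E => (∑ j ∈ S, y j ^ 2) / ∑ j, y j ^ 2) x =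
      2 * ((S.card : ℝ) - d * ∑ j ∈ S, x j ^ 2) := by
  have hcont : Continuous (fun y : E => ∑ j, y j ^ 2) :=
    continuous_finset_sum _ fun j _ => ((EuclideanSpace.proj j : E →L[ℝ] ℝ).continuous).pow 2
  have hmem : {y : E | (∑ j, y j ^ 2) ≠ 0} ∈ nhds x := by
    refine (isOpen_compl_singleton.preimage hcont).mem_nhds ?_
    simp [hx']
  have key : ∀ i, fderiv ℝ (fun y =>
      fderiv ℝ (fun y : E => (∑ j ∈ S, y j ^ 2) / ∑ j, y j ^ 2) y (EuclideanSpace.single i 1)) x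
        (EuclideanSpace.single i 1) =
      2 * (if i ∈ S then (1:ℝ) else 0) - 8 * (if i ∈ S then (1:ℝ) else 0) * x i ^ 2
        - 2 * (∑ j ∈ S, x j ^ 2) + 8 * x i ^ 2 * (∑ j ∈ S, x j ^ 2) := by
    intro i
    have hev : (fun y => fderiv ℝ (fun y : E => (∑ j ∈ S, y j ^ 2) / ∑ j, y j ^ 2) y
        (EuclideanSpace.single i 1)) =ᶠ[nhds x]
        (fun y : E => (if i ∈ S then (1:ℝ) else 0) * (2 * y i) / (∑ j, y j ^ 2)
          - 2 * (∑ j ∈ S, y j ^ 2) * y i / (∑ j, y j ^ 2) ^ 2) :=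
      Filter.eventuallyEq_of_mem hmem (fun y hy => fderiv_dir S y hy i)
    rw [hev.fderiv_eq, fderiv_second S i x hx']
  unfold lap
  rw [Finset.sum_congr rfl fun i _ => key i]
  have e1 : ∑ i, (if i ∈ S then (1:ℝ) else 0) = S.card := by
    simp [Finset.sum_ite_mem]
  have e2 : ∑ i, ((if i ∈ S then (1:ℝ) else 0) * x i ^ 2) = ∑ j ∈ S, x j ^ 2 := by
    simp [ite_mul, Finset.sum_ite_mem]
  calc ∑ i, (2 * (if i ∈ S then (1:ℝ) else 0) - 8 * (if i ∈ S then (1:ℝ) else 0) * x i ^ 2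
        - 2 * (∑ j ∈ S, x j ^ 2) + 8 * x i ^ 2 * (∑ j ∈ S, x j ^ 2))
      = ∑ i, (2 * (if i ∈ S then (1:ℝ) else 0) - 8 * ((if i ∈ S then (1:ℝ) else 0) * x i ^ 2)
        - 2 * (∑ j ∈ S, x j ^ 2) + (8 * (∑ j ∈ S, x j ^ 2)) * x i ^ 2) :=
        Finset.sum_congr rfl fun i _ => by ring
    _ = 2 * ((S.card : ℝ)) - 8 * (∑ j ∈ S, x j ^ 2) - (d : ℝ) * (2 * (∑ j ∈ S, x j ^ 2))
        + (8 * (∑ j ∈ S, x j ^ 2)) * 1 := by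
        rw [Finset.sum_add_distrib, Finset.sum_sub_distrib, Finset.sum_sub_distrib,
          ← Finset.mul_sum, ← Finset.mul_sum, e1, e2]
        have e3 : ∑ i : Fin d, (8 * ∑ j ∈ S, x j ^ 2) * x i ^ 2
            = (8 * ∑ j ∈ S, x j ^ 2) * ∑ i, x i ^ 2 := (Finset.mul_sum _ _ _).symm
        rw [e3, hx', Finset.sum_const, Finset.card_univ, Fintype.card_fin, nsmul_eq_mul]
    _ = 2 * ((S.card : ℝ) - d * ∑ j ∈ S, x j ^ 2) := by ring

lemma inner_grad (S T : Finset (Fin d)) (x : E) (hx' : ∑ j, x j ^ 2 = 1) :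
    @inner ℝ E _ (WithLp.toLp 2 (fun j => 2 * ((if j ∈ S then x j else 0) - (∑ i ∈ S, x i ^ 2) * x j)) : E)
      (WithLp.toLp 2 (fun j => 2 * ((if j ∈ T then x j else 0) - (∑ i ∈ T, x i ^ 2) * x j)) : E) =
    4 * ((∑ j ∈ S ∩ T, x j ^ 2) - (∑ j ∈ S, x j ^ 2) * (∑ j ∈ T, x j ^ 2)) := by
  simp only [PiLp.inner_apply, RCLike.inner_apply, conj_trivial, PiLp.toLp_apply]
  have h1 : ∀ j, (2 * ((if j ∈ S then x j else 0) - (∑ i ∈ S, x i ^ 2) * x j))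
      * (2 * ((if j ∈ T then x j else 0) - (∑ i ∈ T, x i ^ 2) * x j)) =
      4 * ((if j ∈ S ∩ T then x j ^ 2 else 0)
        - (∑ i ∈ T, x i ^ 2) * (if j ∈ S then x j ^ 2 else 0)
        - (∑ i ∈ S, x i ^ 2) * (if j ∈ T then x j ^ 2 else 0)
        + (∑ i ∈ S, x i ^ 2) * (∑ i ∈ T, x i ^ 2) * x j ^ 2) := by
    intro j
    by_cases hs : j ∈ S <;> by_cases ht : j ∈ T <;>
      simp [Finset.mem_inter, hs, ht] <;> ring
  rw [Finset.sum_congr rfl fun j _ => (mul_comm _ _).trans (h1 j), ← Finset.mul_sum, Finset.sum_add_distrib,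
    Finset.sum_sub_distrib, Finset.sum_sub_distrib, Finset.sum_ite_mem, Finset.univ_inter,
    ← Finset.mul_sum, ← Finset.mul_sum, ← Finset.mul_sum, Finset.sum_ite_mem,
    Finset.sum_ite_mem, Finset.univ_inter, Finset.univ_inter, hx']
  ring


end Aux

/-- Partition `{1,…,d}` into disjoint blocks `B₁,…,B_k` of sizes `p₁,…,p_k`, let
`u_m(y) = Σ_{j ∈ B_m} y_j²` and `X̂_m(y) = u_m(y)/‖y‖²`. Then for `‖x‖ = 1`:
`ΔX̂_m(x) = 2(p_m - d·u_m(x))` and `⟪∇X̂_m(x), ∇X̂_l(x)⟫ = 4 u_m(x)(δ_{ml} - u_l(x))`. -/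
theorem stmt_9 (d k : ℕ) (hd : 1 ≤ d) (p : Fin k → ℕ)
    (B : Fin k → Finset (Fin d))
    (hdisj : ∀ m l, m ≠ l → Disjoint (B m) (B l))
    (hcover : ∀ j : Fin d, ∃ m, j ∈ B m)
    (hcard : ∀ m, (B m).card = p m)
    (m l : Fin k) (x : EuclideanSpace ℝ (Fin d)) (hx : ‖x‖ = 1) :
    lap (fun y => (∑ j ∈ B m, y j ^ 2) / ‖y‖ ^ 2) x =
      2 * ((p m : ℝ) - d * ∑ j ∈ B m, x j ^ 2) ∧
    ⟪gradient (fun y : EuclideanSpace ℝ (Fin d) => (∑ j ∈ B m, y j ^ 2) / ‖y‖ ^ 2) x,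
      gradient (fun y : EuclideanSpace ℝ (Fin d) => (∑ j ∈ B l, y j ^ 2) / ‖y‖ ^ 2) x⟫ =
      4 * (∑ j ∈ B m, x j ^ 2) * ((if m = l then 1 else 0) - ∑ j ∈ B l, x j ^ 2) := by
  have hx' : ∑ j, x j ^ 2 = 1 := by rw [← norm_sq_eq, hx]; norm_num
  have hfe : ∀ (S : Finset (Fin d)),
      (fun y : EuclideanSpace ℝ (Fin d) => (∑ j ∈ S, y j ^ 2) / ‖y‖ ^ 2) =
      (fun y : EuclideanSpace ℝ (Fin d) => (∑ j ∈ S, y j ^ 2) / ∑ j, y j ^ 2) :=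
    fun S => funext fun y => by rw [norm_sq_eq]
  constructor
  · rw [hfe, lap_aux (B m) x hx', hcard m]
  · rw [hfe, hfe, (hasGradientAt_aux (B m) x hx').gradient,
      (hasGradientAt_aux (B l) x hx').gradient, inner_grad (B m) (B l) x hx']
    by_cases h : m = l
    · subst h; simp only [Finset.inter_self, if_true, eq_self_iff_true]; ring
    · have hBe : B m ∩ B l = ∅ := by
        rw [← Finset.disjoint_iff_inter_eq_empty]; exact hdisj m l h
      rw [hBe]; simp only [Finset.sum_empty, if_neg h]; ring
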